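/- For every (r, r′) ∈ ℂ² and every admissible solution t for (r, r′), there exist a constant C > 0 and M ∈ ℕ such that |t(α, α′)| ≤ C·(1+α)^M for all α, α′ ∈ ℕ. -/
import Mathlib


noncomputable section

/-- ρ = (n-1)/2 as a complex number. -/
def rho (n : ℕ) : ℂ := ((n : ℂ) - 1) / 2

/-- ρ' = (n-2)/2 as a complex number. -/
def rho' (n : ℕ) : ℂ := ((n : ℂ) - 2) / 2

/-- A diagonal sequence for `(r, r')`. -/
def IsDiagSeq (n : ℕ) (r r' : ℂ) (s : ℕ → ℂ) : Prop :=
  ∀ α : ℕ, (2*r' + 2*(α : ℂ) + (n : ℂ) - 2) * s α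
    = (2*r + 2*(α : ℂ) + (n : ℂ) - 1) * s (α + 1)

/-- L_even. -/
def Leven (n : ℕ) : Set (ℂ × ℂ) :=
  {p | ∃ i j : ℕ, p.1 = -rho n - (i : ℂ) ∧ p.2 = -rho' n - (j : ℂ) ∧ ∃ k : ℕ, i = j + 2*k}

/-- L_odd. -/
def Lodd (n : ℕ) : Set (ℂ × ℂ) :=
  {p | ∃ i j : ℕ, p.1 = -rho n - (i : ℂ) ∧ p.2 = -rho' n - (j : ℂ) ∧ ∃ k : ℕ, i = j + 2*k + 1}

/-- An admissible solution `t : ℕ × ℕ → ℂ` for `(r, r')`: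
`t(α,α') = 0` when `α' > α` or `α − α'` is odd (equivalently `α + α'` is odd),
and the relations (R1), (R2) hold for all `α ≥ α'` with `α − α'` even.
The natural-subtraction index `α - 1` is harmless, since in (R1) its coefficient
`(α − α')` vanishes when `α = α'`, and in (R2) we have `α ≥ α' ≥ 1`. -/
def IsAdmissible (n : ℕ) (r r' : ℂ) (t : ℕ → ℕ → ℂ) : Prop :=
  (∀ α α' : ℕ, (α < α' ∨ Odd (α + α')) → t α α' = 0) ∧
  (∀ α α' : ℕ, α' ≤ α → Even (α + α') →
    ((2*(α : ℂ) + (n : ℂ) - 2) * (2*r' + 2*(α' : ℂ) + (n : ℂ) - 2) * t α α'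
      = ((α : ℂ) + (α' : ℂ) + (n : ℂ) - 2) * (2*r + 2*(α : ℂ) + (n : ℂ) - 1)
          * t (α + 1) (α' + 1)
        + ((α : ℂ) - (α' : ℂ)) * (2*r - 2*(α : ℂ) - (n : ℂ) + 3)
          * t (α - 1) (α' + 1)) ∧
    (1 ≤ α' →
      (2*(α : ℂ) + (n : ℂ) - 2) * (2*r' - 2*(α' : ℂ) - (n : ℂ) + 4) * t α α'
      = ((α : ℂ) - (α' : ℂ) + 1) * (2*r + 2*(α : ℂ) + (n : ℂ) - 1)
          * t (α + 1) (α' - 1)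
        + ((α : ℂ) + (α' : ℂ) + (n : ℂ) - 3) * (2*r - 2*(α : ℂ) - (n : ℂ) + 3)
          * t (α - 1) (α' - 1)))

private lemma bern (M : ℕ) (s : ℝ) (hs : 2 ≤ s) :
    (s-1)^M * (1 + 2*(M:ℝ)/s) ≤ (s+1)^M := by
  have hs0 : 0 < s := by linarith
  have h1 : 1 + (M:ℝ) * (2/s) ≤ (1 + 2/s)^M := by
    apply one_add_mul_le_pow
    have : 0 < 2/s := by positivity
    linarith
  have hnn : (0:ℝ) ≤ s - 1 := by linarith
  have h2 : (s-1) * (1+2/s) ≤ s+1 := by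
    have : (s-1)*(1+2/s) = s + 1 - 2/s := by field_simp; ring
    rw [this]
    have : 0 < 2/s := by positivity
    linarith
  calc (s-1)^M * (1 + 2*(M:ℝ)/s) = (s-1)^M * (1 + (M:ℝ)*(2/s)) := by ring
    _ ≤ (s-1)^M * (1+2/s)^M := by
        apply mul_le_mul_of_nonneg_left h1 (by positivity)
    _ = ((s-1)*(1+2/s))^M := (mul_pow _ _ _).symm
    _ ≤ (s+1)^M := by
        apply pow_le_pow_left₀ (by positivity) h2

private lemma keyIneq1 (A Mr a b P Q : ℝ) (hA : 13 ≤ A) (hM : 20*A^2 ≤ Mr)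
    (ha : 8*A+8 ≤ a) (hb : 0 ≤ b) (hba : b ≤ a) (hQ : 0 ≤ Q)
    (hPQ : Q * (1 + 2*Mr/(a+b+2)) ≤ P) :
    (2*a+A)*(a+b+A)*Q ≤ (a+b+1)*(2*a-A)*P := by
  have hs : 0 < a+b+2 := by linarith
  have hApos : 0 < A := by linarith
  have haA : A ≤ a := by linarith
  have ha0 : 0 < a := by linarith
  have hMr0 : (0:ℝ) ≤ Mr := le_trans (by positivity) hM
  have q1 : a*a ≤ (a+b+1)*(2*a-A) := by nlinarith
  have t1 : (a*a)*(20*A^2) ≤ ((a+b+1)*(2*a-A))*Mr :=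
    mul_le_mul q1 hM (by positivity) (by nlinarith)
  have t2 : (a+b+2)*(4*a*A + 2*A*b + A + A^2) ≤ 24*(a*a)*A := by
    have w1 : a+b+2 ≤ 3*a := by linarith
    have w2 : 4*a*A + 2*A*b + A + A^2 ≤ 8*(a*A) := by
      nlinarith [mul_le_mul_of_nonneg_left hba hApos.le,
        mul_le_mul_of_nonneg_left (show (1:ℝ) ≤ a by linarith) hApos.le,
        mul_le_mul_of_nonneg_left haA hApos.le]
    calc (a+b+2)*(4*a*A + 2*A*b + A + A^2) ≤ (3*a)*(8*(a*A)) :=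
          mul_le_mul w1 w2 (by positivity) (by linarith)
      _ = 24*(a*a)*A := by ring
  have t3 : 24*(a*a)*A ≤ 2*((a*a)*(20*A^2)) := by
    nlinarith [mul_nonneg (mul_nonneg ha0.le ha0.le) (show (0:ℝ) ≤ 40*A^2-24*A by nlinarith)]
  have key : (2*a+A)*(a+b+A) * (a+b+2) ≤ (a+b+1)*(2*a-A) * ((a+b+2) + 2*Mr) := by
    nlinarith [t1, t2, t3, mul_nonneg (show (0:ℝ) ≤ a+b+2 by linarith) (show (0:ℝ) ≤ 2*a by linarith)]
  have h2 : (2*a+A)*(a+b+A) ≤ (a+b+1)*(2*a-A)*(1+2*Mr/(a+b+2)) := by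
    rw [show (1+2*Mr/(a+b+2)) = ((a+b+2)+2*Mr)/(a+b+2) by field_simp]
    rw [← mul_div_assoc, le_div_iff₀ hs]
    linarith [key]
  have hpos : (0:ℝ) ≤ (a+b+1)*(2*a-A) := by nlinarith
  calc (2*a+A)*(a+b+A)*Q ≤ ((a+b+1)*(2*a-A)*(1+2*Mr/(a+b+2)))*Q :=
        mul_le_mul_of_nonneg_right h2 hQ
    _ = (a+b+1)*(2*a-A) * (Q*(1+2*Mr/(a+b+2))) := by ring
    _ ≤ (a+b+1)*(2*a-A) * P := mul_le_mul_of_nonneg_left hPQ hpos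

private lemma keyIneq2 (A Mr a P Q : ℝ) (hA : 13 ≤ A) (hM : 20*A^2 ≤ Mr)
    (ha : 8*A+8 ≤ a) (hQ : 0 ≤ Q) (hP : 0 ≤ P)
    (hPQ : Q * (1 + 2*Mr/(a+1)) ≤ P) :
    (2*a+A)*A*P + (a+A)*(2*a+A)*Q ≤ a*(2*a-A)*P := by
  have hs : 0 < a+1 := by linarith
  have hApos : 0 < A := by linarith
  have haA : 8*A ≤ a := by linarith
  have ha0 : 0 < a := by linarith
  have hMr0 : (0:ℝ) ≤ Mr := le_trans (by positivity) hM
  have hAa : A*A ≤ A*a := mul_le_mul_of_nonneg_left (by linarith) hApos.le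
  have u1 : a*a ≤ 2*a^2 - 5*a*A - 2*A^2 := by
    nlinarith [mul_le_mul_of_nonneg_right haA ha0.le]
  have u2 : (a*a)*(2*(20*A^2)) ≤ (2*a^2 - 5*a*A - 2*A^2)*(2*Mr) := by
    have := mul_le_mul u1 (show 2*(20*A^2) ≤ 2*Mr by linarith) (by positivity)
      (by nlinarith)
    linarith [this]
  have u3 : (a+1)*(8*a*A+3*A^2) ≤ 22*(a*a)*A := by
    have w1 : a+1 ≤ 2*a := by linarith
    have w2 : 8*a*A+3*A^2 ≤ 11*(a*A) := by nlinarith [hAa]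
    calc (a+1)*(8*a*A+3*A^2) ≤ (2*a)*(11*(a*A)) :=
          mul_le_mul w1 w2 (by nlinarith [hAa]) (by linarith)
      _ = 22*(a*a)*A := by ring
  have u4 : 22*(a*a)*A ≤ (a*a)*(2*(20*A^2)) := by
    nlinarith [mul_nonneg (mul_nonneg ha0.le ha0.le) (show (0:ℝ) ≤ 40*A^2-22*A by nlinarith)]
  have key : ((a+A)*(2*a+A)) * (a+1) ≤ (2*a^2 - 3*a*A - A^2 - (2*a+A)*A) * ((a+1) + 2*Mr) := by
    nlinarith [u2, u3, u4, mul_nonneg (show (0:ℝ) ≤ 2*a^2-5*a*A-2*A^2 by nlinarith) (show (0:ℝ) ≤ a+1 by linarith)]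
  have hGpos : (0:ℝ) ≤ 2*a^2 - 3*a*A - A^2 - (2*a+A)*A := by nlinarith
  have h2 : (a+A)*(2*a+A) ≤ (2*a^2 - 3*a*A - A^2 - (2*a+A)*A)*(1+2*Mr/(a+1)) := by
    rw [show (1+2*Mr/(a+1)) = ((a+1)+2*Mr)/(a+1) by field_simp]
    rw [← mul_div_assoc, le_div_iff₀ hs]
    linarith [key]
  have h3 : (a+A)*(2*a+A)*Q ≤ (2*a^2 - 3*a*A - A^2 - (2*a+A)*A) * P :=
    calc (a+A)*(2*a+A)*Q ≤ ((2*a^2 - 3*a*A - A^2 - (2*a+A)*A)*(1+2*Mr/(a+1)))*Q :=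
          mul_le_mul_of_nonneg_right h2 hQ
      _ = (2*a^2 - 3*a*A - A^2 - (2*a+A)*A) * (Q*(1+2*Mr/(a+1))) := by ring
      _ ≤ _ := mul_le_mul_of_nonneg_left hPQ hGpos
  nlinarith [h3]

private lemma nbL (r : ℂ) (n : ℕ) (hn : 3 ≤ n) (A x : ℝ) (hx : 0 ≤ x)
    (hA : 2*‖r‖ + (n:ℝ) ≤ A) :
    2*x - A ≤ ‖2*r + 2*(x:ℂ) + (n:ℂ) - 1‖ := by
  have hn3 : (3:ℝ) ≤ n := by exact_mod_cast hn
  have h : (2*r + 2*(x:ℂ) + (n:ℂ) - 1) = 2*r + ((2*x + (n:ℝ) - 1 : ℝ) : ℂ) := by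
    push_cast; ring
  rw [h]
  have h2 : ‖((2*x+(n:ℝ)-1 : ℝ):ℂ)‖ = 2*x+(n:ℝ)-1 := by
    rw [Complex.norm_real, Real.norm_eq_abs, abs_of_nonneg (by linarith)]
  have h3 : ‖((2*x+(n:ℝ)-1 : ℝ):ℂ)‖ ≤ ‖2*r + ((2*x+(n:ℝ)-1 : ℝ):ℂ)‖ + ‖2*r‖ := by
    calc ‖((2*x+(n:ℝ)-1 : ℝ):ℂ)‖ = ‖(2*r + ((2*x+(n:ℝ)-1 : ℝ):ℂ)) - 2*r‖ := by ring_nf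
      _ ≤ _ := norm_sub_le _ _
  have h4 : ‖(2:ℂ)*r‖ = 2*‖r‖ := by
    rw [norm_mul]; simp
  rw [h2, h4] at h3
  linarith

private lemma nbU1 (r : ℂ) (n : ℕ) (hn : 3 ≤ n) (A x : ℝ) (hx : 0 ≤ x)
    (hA : 2*‖r‖ + (n:ℝ) + 3 ≤ A) :
    ‖2*r - 2*(x:ℂ) - (n:ℂ) + 3‖ ≤ 2*x + A := by
  have hn3 : (3:ℝ) ≤ n := by exact_mod_cast hn
  have h : (2*r - 2*(x:ℂ) - (n:ℂ) + 3) = 2*r + ((-(2*x) - (n:ℝ) + 3 : ℝ) : ℂ) := by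
    push_cast; ring
  rw [h]
  have h4 : ‖(2:ℂ)*r‖ = 2*‖r‖ := by rw [norm_mul]; simp
  calc ‖2*r + ((-(2*x) - (n:ℝ) + 3 : ℝ) : ℂ)‖ ≤ ‖(2:ℂ)*r‖ + ‖((-(2*x) - (n:ℝ) + 3 : ℝ) : ℂ)‖ :=
        norm_add_le _ _
    _ = 2*‖r‖ + |(-(2*x) - (n:ℝ) + 3)| := by rw [h4, Complex.norm_real, Real.norm_eq_abs]
    _ ≤ 2*‖r‖ + (2*x + (n:ℝ) + 3) := by
        have : |(-(2*x) - (n:ℝ) + 3)| ≤ 2*x + (n:ℝ) + 3 := abs_le.mpr ⟨by linarith, by linarith⟩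
        linarith
    _ ≤ 2*x + A := by linarith

private lemma nbU2 (r' : ℂ) (n : ℕ) (hn : 3 ≤ n) (A y : ℝ) (hy : 0 ≤ y)
    (hA : 2*‖r'‖ + (n:ℝ) ≤ A) :
    ‖2*r' + 2*(y:ℂ) + (n:ℂ) - 2‖ ≤ 2*y + A := by
  have hn3 : (3:ℝ) ≤ n := by exact_mod_cast hn
  have h : (2*r' + 2*(y:ℂ) + (n:ℂ) - 2) = 2*r' + ((2*y + (n:ℝ) - 2 : ℝ) : ℂ) := by
    push_cast; ring
  rw [h]
  have h4 : ‖(2:ℂ)*r'‖ = 2*‖r'‖ := by rw [norm_mul]; simp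
  calc ‖2*r' + ((2*y + (n:ℝ) - 2 : ℝ) : ℂ)‖ ≤ ‖(2:ℂ)*r'‖ + ‖((2*y + (n:ℝ) - 2 : ℝ) : ℂ)‖ :=
        norm_add_le _ _
    _ = 2*‖r'‖ + |(2*y + (n:ℝ) - 2)| := by rw [h4, Complex.norm_real, Real.norm_eq_abs]
    _ ≤ 2*y + A := by
        have : |(2*y + (n:ℝ) - 2)| ≤ 2*y + (n:ℝ) - 2 + 0 := by
          rw [abs_of_nonneg (by linarith)]; linarith
        linarith

private lemma nbU3 (r' : ℂ) (n : ℕ) (hn : 3 ≤ n) (A : ℝ)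
    (hA : 2*‖r'‖ + (n:ℝ) ≤ A) :
    ‖2*r' - 2 - (n:ℂ) + 4‖ ≤ A := by
  have hn3 : (3:ℝ) ≤ n := by exact_mod_cast hn
  have h : (2*r' - 2 - (n:ℂ) + 4) = 2*r' + ((2 - (n:ℝ) : ℝ) : ℂ) := by
    push_cast; ring
  rw [h]
  have h4 : ‖(2:ℂ)*r'‖ = 2*‖r'‖ := by rw [norm_mul]; simp
  calc ‖2*r' + ((2 - (n:ℝ) : ℝ) : ℂ)‖ ≤ ‖(2:ℂ)*r'‖ + ‖((2 - (n:ℝ) : ℝ) : ℂ)‖ := norm_add_le _ _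
    _ = 2*‖r'‖ + |(2 - (n:ℝ))| := by rw [h4, Complex.norm_real, Real.norm_eq_abs]
    _ ≤ A := by
        have : |(2 - (n:ℝ))| ≤ (n:ℝ) := abs_le.mpr ⟨by linarith, by linarith⟩
        linarith

set_option maxHeartbeats 1000000 in
theorem statement10 (n : ℕ) (hn : 3 ≤ n) (r r' : ℂ) (t : ℕ → ℕ → ℂ)
    (ht : IsAdmissible n r r' t) :
    ∃ C : ℝ, 0 < C ∧ ∃ M : ℕ, ∀ α α' : ℕ, ‖t α α'‖ ≤ C * (1 + (α : ℝ))^M := by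
  obtain ⟨hz, hrec⟩ := ht
  have hn3 : (3:ℝ) ≤ (n:ℝ) := by exact_mod_cast hn
  obtain ⟨A, hA13, hAr, hAr', hArL⟩ :
      ∃ A : ℝ, 13 ≤ A ∧ 2*‖r‖ + (n:ℝ) + 3 ≤ A ∧ 2*‖r'‖ + (n:ℝ) ≤ A ∧
        2*‖r‖ + (n:ℝ) ≤ A := by
    refine ⟨2*‖r‖ + 2*‖r'‖ + (n:ℝ) + 10, ?_, ?_, ?_, ?_⟩ <;>
      · have := norm_nonneg r; have := norm_nonneg r'; linarith
  obtain ⟨M, hMge⟩ : ∃ M : ℕ, 20*A^2 ≤ (M:ℝ) := ⟨⌈20*A^2⌉₊, Nat.le_ceil _⟩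
  obtain ⟨S0, hS0ge, hS0ge20⟩ : ∃ S0 : ℕ, (16*A + 20 : ℝ) ≤ (S0:ℝ) ∧ 20 ≤ S0 := by
    refine ⟨⌈16*A⌉₊ + 20, ?_, by omega⟩
    push_cast
    linarith [Nat.le_ceil (16*A), Nat.cast_nonneg (α := ℝ) ⌈16*A⌉₊]
  obtain ⟨C0, hC0pos, hC0mem⟩ :
      ∃ C0 : ℝ, 0 < C0 ∧ ∀ α α' : ℕ, α ≤ S0 → α' ≤ S0 → ‖t α α'‖ ≤ C0 := by
    refine ⟨1 + ∑ p ∈ Finset.range (S0+1) ×ˢ Finset.range (S0+1), ‖t p.1 p.2‖, ?_, ?_⟩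
    · linarith [Finset.sum_nonneg (s := Finset.range (S0+1) ×ˢ Finset.range (S0+1))
        (f := fun p : ℕ × ℕ => ‖t p.1 p.2‖) (fun _ _ => norm_nonneg _)]
    · intro α α' h1 h2
      have hm : (α, α') ∈ Finset.range (S0+1) ×ˢ Finset.range (S0+1) := by
        rw [Finset.mem_product, Finset.mem_range, Finset.mem_range]
        exact ⟨by omega, by omega⟩
      have h3 : ‖t α α'‖ ≤ ∑ p ∈ Finset.range (S0+1) ×ˢ Finset.range (S0+1), ‖t p.1 p.2‖ :=
        Finset.single_le_sum (f := fun p : ℕ × ℕ => ‖t p.1 p.2‖)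
          (fun _ _ => norm_nonneg _) hm
      linarith
  -- main induction
  have main : ∀ σ : ℕ, ∀ α α' : ℕ, α + α' = σ → ‖t α α'‖ ≤ C0 * ((σ:ℝ)+1)^M := by
    intro σ
    induction σ using Nat.strong_induction_on with
    | _ σ IH =>
      intro α α' hσ
      have hpow1 : (1:ℝ) ≤ ((σ:ℝ)+1)^M :=
        one_le_pow₀ (by linarith [Nat.cast_nonneg (α := ℝ) σ])
      have hRHSpos : 0 ≤ C0 * ((σ:ℝ)+1)^M := mul_nonneg hC0pos.le (by positivity)
      by_cases htriv : α < α' ∨ Odd (α + α')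
      · rw [hz α α' htriv, norm_zero]; exact hRHSpos
      push_neg at htriv
      obtain ⟨hle', hodd'⟩ := htriv
      have hev' : Even (α + α') := Nat.not_odd_iff_even.mp hodd'
      have hle : α' ≤ α := hle'
      by_cases hbase : σ ≤ S0
      · have := hC0mem α α' (by omega) (by omega)
        calc ‖t α α'‖ ≤ C0 := this
          _ = C0 * 1 := by ring
          _ ≤ C0 * ((σ:ℝ)+1)^M := mul_le_mul_of_nonneg_left hpow1 hC0pos.le
      push_neg at hbase
      have hσS0 : ((S0:ℝ)+1) ≤ (σ:ℝ) := by exact_mod_cast hbase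
      have hσ2 : (2:ℝ) ≤ (σ:ℝ) := by linarith
      have hber := bern M (σ:ℝ) hσ2
      -- helper: bound for entries with α' ≥ 1 on this antidiagonal
      have h1 : ∀ β β' : ℕ, β + β' = σ → β' ≤ β → Even (β + β') → 1 ≤ β' →
          ‖t β β'‖ ≤ C0 * ((σ:ℝ)+1)^M := by
        intro β β' hsum hble hbev hb1
        have hβ2 : 2 ≤ β := by omega
        obtain ⟨c, rfl⟩ : ∃ c, β = c + 2 := ⟨β - 2, by omega⟩
        obtain ⟨b, rfl⟩ : ∃ b, β' = b + 1 := ⟨β' - 1, by omega⟩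
        have hba : b ≤ c + 1 := by omega
        have hev2 : Even ((c+1) + b) := by
          rw [Nat.even_iff] at hbev ⊢; omega
        have E := (hrec (c+1) b hba hev2).1
        simp only [Nat.add_sub_cancel] at E
        push_cast at E
        have E2 : ((c:ℂ)+1+(b:ℂ)+(n:ℂ)-2)*(2*r+2*((c:ℂ)+1)+(n:ℂ)-1) * t (c+1+1) (b+1)
            = (2*((c:ℂ)+1)+(n:ℂ)-2)*(2*r'+2*(b:ℂ)+(n:ℂ)-2) * t (c+1) b
              - ((c:ℂ)+1-(b:ℂ))*(2*r-2*((c:ℂ)+1)-(n:ℂ)+3) * t c (b+1) := by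
          linear_combination -E
        -- real abbreviations
        have hσc : (σ:ℝ) = (c:ℝ) + (b:ℝ) + 3 := by
          have hq : c + b + 3 = σ := by omega
          exact_mod_cast hq.symm
        have hc2 : 2*(c:ℝ)+4 ≥ (σ:ℝ) := by
          have : σ ≤ 2*c + 4 := by omega
          exact_mod_cast this
        have hage : 8*A+8 ≤ (c:ℝ)+1 := by linarith
        have hb0 : (0:ℝ) ≤ (b:ℝ) := Nat.cast_nonneg b
        have hbc : (b:ℝ) ≤ (c:ℝ)+1 := by exact_mod_cast hba
        -- norm bounds
        have hL1 : ((c:ℝ)+1+(b:ℝ)+1) ≤ ‖((c:ℂ)+1+(b:ℂ)+(n:ℂ)-2)‖ := by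
          have he : ((c:ℂ)+1+(b:ℂ)+(n:ℂ)-2) = (((c:ℝ)+1+(b:ℝ)+(n:ℝ)-2 : ℝ) : ℂ) := by
            push_cast; ring
          rw [he, Complex.norm_real, Real.norm_eq_abs, abs_of_nonneg (by linarith)]
          linarith [norm_nonneg r, norm_nonneg r']
        have hL2 : 2*((c:ℝ)+1) - A ≤ ‖(2*r+2*((c:ℂ)+1)+(n:ℂ)-1)‖ := by
          have hh := nbL r n hn A ((c:ℝ)+1) (by linarith) hArL
          have hx : ((((c:ℝ)+1 : ℝ)):ℂ) = (c:ℂ)+1 := by push_cast; ring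
          rwa [hx] at hh
        have hc11 : ‖(2*((c:ℂ)+1)+(n:ℂ)-2)‖ ≤ 2*((c:ℝ)+1)+A := by
          have he : (2*((c:ℂ)+1)+(n:ℂ)-2) = ((2*((c:ℝ)+1)+(n:ℝ)-2 : ℝ) : ℂ) := by
            push_cast; ring
          rw [he, Complex.norm_real, Real.norm_eq_abs, abs_of_nonneg (by linarith)]
          linarith [norm_nonneg r, norm_nonneg r']
        have hc12 : ‖(2*r'+2*(b:ℂ)+(n:ℂ)-2)‖ ≤ 2*(b:ℝ)+A := by
          have hh := nbU2 r' n hn A (b:ℝ) hb0 hAr'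
          have hx : (((b:ℝ) : ℝ):ℂ) = (b:ℂ) := by push_cast; ring
          rwa [hx] at hh
        have hc21 : ‖((c:ℂ)+1-(b:ℂ))‖ = (c:ℝ)+1-(b:ℝ) := by
          have he : ((c:ℂ)+1-(b:ℂ)) = (((c:ℝ)+1-(b:ℝ) : ℝ) : ℂ) := by push_cast; ring
          rw [he, Complex.norm_real, Real.norm_eq_abs, abs_of_nonneg (by linarith)]
        have hc22 : ‖(2*r-2*((c:ℂ)+1)-(n:ℂ)+3)‖ ≤ 2*((c:ℝ)+1)+A := by
          have hh := nbU1 r n hn A ((c:ℝ)+1) (by linarith) hAr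
          have hx : ((((c:ℝ)+1 : ℝ)):ℂ) = (c:ℂ)+1 := by push_cast; ring
          rwa [hx] at hh
        -- IH bounds
        have hY : ‖t (c+1) b‖ ≤ C0 * ((σ:ℝ)-1)^M := by
          have := IH (c+1+b) (by omega) (c+1) b rfl
          have hq : ((c+1+b:ℕ):ℝ)+1 = (σ:ℝ)-1 := by push_cast; linarith
          rwa [hq] at this
        have hZ : ‖t c (b+1)‖ ≤ C0 * ((σ:ℝ)-1)^M := by
          have := IH (c+(b+1)) (by omega) c (b+1) rfl
          have hq : ((c+(b+1):ℕ):ℝ)+1 = (σ:ℝ)-1 := by push_cast; linarith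
          rwa [hq] at this
        -- combine
        set X := ‖t (c+1+1) (b+1)‖ with hXdef
        have hnorm : ‖((c:ℂ)+1+(b:ℂ)+(n:ℂ)-2)‖ * ‖(2*r+2*((c:ℂ)+1)+(n:ℂ)-1)‖ * X
            ≤ ‖(2*((c:ℂ)+1)+(n:ℂ)-2)‖ * ‖(2*r'+2*(b:ℂ)+(n:ℂ)-2)‖ * ‖t (c+1) b‖
              + ‖((c:ℂ)+1-(b:ℂ))‖ * ‖(2*r-2*((c:ℂ)+1)-(n:ℂ)+3)‖ * ‖t c (b+1)‖ := by
          rw [hXdef, ← norm_mul, ← norm_mul, ← norm_mul, ← norm_mul, ← norm_mul, ← norm_mul]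
          rw [E2]
          exact norm_sub_le _ _
        have hσ1 : (0:ℝ) ≤ (σ:ℝ)-1 := by linarith
        have hQnn : (0:ℝ) ≤ C0 * ((σ:ℝ)-1)^M :=
          mul_nonneg hC0pos.le (pow_nonneg hσ1 M)
        have hDpos : (0:ℝ) < ((c:ℝ)+1+(b:ℝ)+1)*(2*((c:ℝ)+1)-A) :=
          mul_pos (by linarith) (by linarith)
        have hLlow : ((c:ℝ)+1+(b:ℝ)+1)*(2*((c:ℝ)+1)-A)
            ≤ ‖((c:ℂ)+1+(b:ℂ)+(n:ℂ)-2)‖ * ‖(2*r+2*((c:ℂ)+1)+(n:ℂ)-1)‖ :=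
          mul_le_mul hL1 hL2 (by linarith) (le_trans (by linarith) hL1)
        have e1 : ‖(2*((c:ℂ)+1)+(n:ℂ)-2)‖ * ‖(2*r'+2*(b:ℂ)+(n:ℂ)-2)‖ * ‖t (c+1) b‖
            ≤ (2*((c:ℝ)+1)+A)*(2*(b:ℝ)+A)*(C0 * ((σ:ℝ)-1)^M) := by
          apply mul_le_mul _ hY (norm_nonneg _)
            (mul_nonneg (by linarith) (by linarith))
          apply mul_le_mul hc11 hc12 (norm_nonneg _) (by linarith)
        have e2 : ‖((c:ℂ)+1-(b:ℂ))‖ * ‖(2*r-2*((c:ℂ)+1)-(n:ℂ)+3)‖ * ‖t c (b+1)‖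
            ≤ ((c:ℝ)+1-(b:ℝ))*(2*((c:ℝ)+1)+A)*(C0 * ((σ:ℝ)-1)^M) := by
          apply mul_le_mul _ hZ (norm_nonneg _)
            (mul_nonneg (by linarith) (by linarith))
          rw [hc21]
          apply mul_le_mul_of_nonneg_left hc22 (by linarith)
        have hPQ : (C0 * ((σ:ℝ)-1)^M) * (1 + 2*(M:ℝ)/(((c:ℝ)+1)+(b:ℝ)+2)) ≤ C0 * ((σ:ℝ)+1)^M := by
          have hden : ((c:ℝ)+1)+(b:ℝ)+2 = (σ:ℝ) := by linarith
          rw [hden]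
          calc (C0 * ((σ:ℝ)-1)^M) * (1 + 2*(M:ℝ)/(σ:ℝ))
              = C0 * (((σ:ℝ)-1)^M * (1 + 2*(M:ℝ)/(σ:ℝ))) := by ring
            _ ≤ C0 * (((σ:ℝ)+1)^M) := mul_le_mul_of_nonneg_left hber hC0pos.le
        have hkey := keyIneq1 A (M:ℝ) ((c:ℝ)+1) (b:ℝ) (C0 * ((σ:ℝ)+1)^M) (C0 * ((σ:ℝ)-1)^M)
          hA13 hMge hage hb0 hbc hQnn hPQ
        have hchain : (((c:ℝ)+1+(b:ℝ)+1)*(2*((c:ℝ)+1)-A)) * X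
            ≤ (((c:ℝ)+1+(b:ℝ)+1)*(2*((c:ℝ)+1)-A)) * (C0 * ((σ:ℝ)+1)^M) := by
          calc (((c:ℝ)+1+(b:ℝ)+1)*(2*((c:ℝ)+1)-A)) * X
              ≤ (‖((c:ℂ)+1+(b:ℂ)+(n:ℂ)-2)‖ * ‖(2*r+2*((c:ℂ)+1)+(n:ℂ)-1)‖) * X :=
                mul_le_mul_of_nonneg_right hLlow (norm_nonneg _)
            _ ≤ (2*((c:ℝ)+1)+A)*(2*(b:ℝ)+A)*(C0 * ((σ:ℝ)-1)^M)
                  + ((c:ℝ)+1-(b:ℝ))*(2*((c:ℝ)+1)+A)*(C0 * ((σ:ℝ)-1)^M) := by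
                calc _ ≤ _ := hnorm
                  _ ≤ _ := add_le_add e1 e2
            _ = (2*((c:ℝ)+1)+A)*(((c:ℝ)+1)+(b:ℝ)+A)*(C0 * ((σ:ℝ)-1)^M) := by ring
            _ ≤ (((c:ℝ)+1)+(b:ℝ)+1)*(2*((c:ℝ)+1)-A)*(C0 * ((σ:ℝ)+1)^M) := hkey
        exact le_of_mul_le_mul_left hchain hDpos
      -- now the full claim for (α, α')
      by_cases h01 : 1 ≤ α'
      · exact h1 α α' hσ hle hev' h01
      · -- α' = 0
        have hα'0 : α' = 0 := by omega
        subst hα'0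
        obtain ⟨c, hc⟩ : ∃ c, α = c + 2 := ⟨α - 2, by omega⟩
        rw [hc]
        have hev2 : Even ((c+1) + 1) := by
          rw [Nat.even_iff] at hev' ⊢; omega
        have E := ((hrec (c+1) 1 (by omega) hev2).2 le_rfl)
        simp only [Nat.add_sub_cancel, Nat.sub_self] at E
        push_cast at E
        have E2 : ((c:ℂ)+1)*(2*r+2*((c:ℂ)+1)+(n:ℂ)-1) * t (c+1+1) 0
            = (2*((c:ℂ)+1)+(n:ℂ)-2)*(2*r'-2-(n:ℂ)+4) * t (c+1) 1
              - ((c:ℂ)+1+1+(n:ℂ)-3)*(2*r-2*((c:ℂ)+1)-(n:ℂ)+3) * t c 0 := by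
          linear_combination -E
        have hσr : (σ:ℝ) = (c:ℝ)+2 := by
          have hq : σ = c + 2 := by omega
          exact_mod_cast hq
        have hage : 8*A+8 ≤ (c:ℝ)+1 := by
          rw [hσr] at hσS0; linarith
        -- norm bounds
        have hL1 : ((c:ℝ)+1) ≤ ‖((c:ℂ)+1 : ℂ)‖ := by
          have he : ((c:ℂ)+1) = (((c:ℝ)+1 : ℝ) : ℂ) := by push_cast; ring
          rw [he, Complex.norm_real, Real.norm_eq_abs, abs_of_nonneg (by positivity)]
        have hL2 : 2*((c:ℝ)+1) - A ≤ ‖(2*r+2*((c:ℂ)+1)+(n:ℂ)-1)‖ := by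
          have hh := nbL r n hn A ((c:ℝ)+1) (by positivity) hArL
          have hx : ((((c:ℝ)+1 : ℝ)):ℂ) = (c:ℂ)+1 := by push_cast; ring
          rwa [hx] at hh
        have hc11 : ‖(2*((c:ℂ)+1)+(n:ℂ)-2)‖ ≤ 2*((c:ℝ)+1)+A := by
          have he : (2*((c:ℂ)+1)+(n:ℂ)-2) = ((2*((c:ℝ)+1)+(n:ℝ)-2 : ℝ) : ℂ) := by
            push_cast; ring
          rw [he, Complex.norm_real, Real.norm_eq_abs, abs_of_nonneg (by linarith)]
          linarith [norm_nonneg r, norm_nonneg r']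
        have hc12 : ‖(2*r'-2-(n:ℂ)+4)‖ ≤ A := nbU3 r' n hn A hAr'
        have hc21 : ‖((c:ℂ)+1+1+(n:ℂ)-3)‖ ≤ (c:ℝ)+1+A := by
          have he : ((c:ℂ)+1+1+(n:ℂ)-3) = (((c:ℝ)+(n:ℝ)-1 : ℝ) : ℂ) := by push_cast; ring
          rw [he, Complex.norm_real, Real.norm_eq_abs, abs_of_nonneg (by linarith)]
          linarith [norm_nonneg r, norm_nonneg r']
        have hc22 : ‖(2*r-2*((c:ℂ)+1)-(n:ℂ)+3)‖ ≤ 2*((c:ℝ)+1)+A := by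
          have hh := nbU1 r n hn A ((c:ℝ)+1) (by positivity) hAr
          have hx : ((((c:ℝ)+1 : ℝ)):ℂ) = (c:ℂ)+1 := by push_cast; ring
          rwa [hx] at hh
        -- bounds on Y and Z
        have hY : ‖t (c+1) 1‖ ≤ C0 * ((σ:ℝ)+1)^M := by
          apply h1 (c+1) 1 (by omega) (by omega) _ le_rfl
          rw [Nat.even_iff] at hev' ⊢; omega
        have hZ : ‖t c 0‖ ≤ C0 * ((σ:ℝ)-1)^M := by
          have := IH c (by omega) c 0 (by omega)
          have hq : ((c:ℕ):ℝ)+1 = (σ:ℝ)-1 := by rw [hσr]; ring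
          rwa [hq] at this
        set X := ‖t (c+1+1) 0‖ with hXdef
        have hnorm : ‖((c:ℂ)+1 : ℂ)‖ * ‖(2*r+2*((c:ℂ)+1)+(n:ℂ)-1)‖ * X
            ≤ ‖(2*((c:ℂ)+1)+(n:ℂ)-2)‖ * ‖(2*r'-2-(n:ℂ)+4)‖ * ‖t (c+1) 1‖
              + ‖((c:ℂ)+1+1+(n:ℂ)-3)‖ * ‖(2*r-2*((c:ℂ)+1)-(n:ℂ)+3)‖ * ‖t c 0‖ := by
          rw [hXdef, ← norm_mul, ← norm_mul, ← norm_mul, ← norm_mul, ← norm_mul, ← norm_mul]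
          rw [E2]
          exact norm_sub_le _ _
        have hσ1 : (0:ℝ) ≤ (σ:ℝ)-1 := by linarith
        have hQnn : (0:ℝ) ≤ C0 * ((σ:ℝ)-1)^M :=
          mul_nonneg hC0pos.le (pow_nonneg hσ1 M)
        have hPnn : (0:ℝ) ≤ C0 * ((σ:ℝ)+1)^M :=
          mul_nonneg hC0pos.le (pow_nonneg (by linarith) M)
        have hc0 : (0:ℝ) ≤ (c:ℝ) := Nat.cast_nonneg c
        have hDpos : (0:ℝ) < ((c:ℝ)+1)*(2*((c:ℝ)+1)-A) :=
          mul_pos (by linarith) (by linarith)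
        have hLlow : ((c:ℝ)+1)*(2*((c:ℝ)+1)-A)
            ≤ ‖((c:ℂ)+1 : ℂ)‖ * ‖(2*r+2*((c:ℂ)+1)+(n:ℂ)-1)‖ :=
          mul_le_mul hL1 hL2 (by linarith) (le_trans (by linarith) hL1)
        have e1 : ‖(2*((c:ℂ)+1)+(n:ℂ)-2)‖ * ‖(2*r'-2-(n:ℂ)+4)‖ * ‖t (c+1) 1‖
            ≤ (2*((c:ℝ)+1)+A)*A*(C0 * ((σ:ℝ)+1)^M) := by
          apply mul_le_mul _ hY (norm_nonneg _)
            (mul_nonneg (by linarith) (by linarith))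
          apply mul_le_mul hc11 hc12 (norm_nonneg _) (by linarith)
        have e2 : ‖((c:ℂ)+1+1+(n:ℂ)-3)‖ * ‖(2*r-2*((c:ℂ)+1)-(n:ℂ)+3)‖ * ‖t c 0‖
            ≤ ((c:ℝ)+1+A)*(2*((c:ℝ)+1)+A)*(C0 * ((σ:ℝ)-1)^M) := by
          apply mul_le_mul _ hZ (norm_nonneg _)
            (mul_nonneg (by linarith) (by linarith))
          apply mul_le_mul hc21 hc22 (norm_nonneg _) (by linarith)
        have hPQ : (C0 * ((σ:ℝ)-1)^M) * (1 + 2*(M:ℝ)/(((c:ℝ)+1)+1)) ≤ C0 * ((σ:ℝ)+1)^M := by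
          have hden : ((c:ℝ)+1)+1 = (σ:ℝ) := by rw [hσr]; ring
          rw [hden]
          calc (C0 * ((σ:ℝ)-1)^M) * (1 + 2*(M:ℝ)/(σ:ℝ))
              = C0 * (((σ:ℝ)-1)^M * (1 + 2*(M:ℝ)/(σ:ℝ))) := by ring
            _ ≤ C0 * (((σ:ℝ)+1)^M) := mul_le_mul_of_nonneg_left hber hC0pos.le
        have hkey := keyIneq2 A (M:ℝ) ((c:ℝ)+1) (C0 * ((σ:ℝ)+1)^M) (C0 * ((σ:ℝ)-1)^M)
          hA13 hMge hage hQnn hPnn hPQ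
        have hchain : (((c:ℝ)+1)*(2*((c:ℝ)+1)-A)) * X
            ≤ (((c:ℝ)+1)*(2*((c:ℝ)+1)-A)) * (C0 * ((σ:ℝ)+1)^M) := by
          calc (((c:ℝ)+1)*(2*((c:ℝ)+1)-A)) * X
              ≤ (‖((c:ℂ)+1 : ℂ)‖ * ‖(2*r+2*((c:ℂ)+1)+(n:ℂ)-1)‖) * X :=
                mul_le_mul_of_nonneg_right hLlow (norm_nonneg _)
            _ ≤ (2*((c:ℝ)+1)+A)*A*(C0 * ((σ:ℝ)+1)^M)
                  + ((c:ℝ)+1+A)*(2*((c:ℝ)+1)+A)*(C0 * ((σ:ℝ)-1)^M) := by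
                calc _ ≤ _ := hnorm
                  _ ≤ _ := add_le_add e1 e2
            _ ≤ ((c:ℝ)+1)*(2*((c:ℝ)+1)-A)*(C0 * ((σ:ℝ)+1)^M) := hkey
        exact le_of_mul_le_mul_left hchain hDpos
  -- conclude
  refine ⟨C0 * 2^M, mul_pos hC0pos (by positivity), M, fun α α' => ?_⟩
  by_cases h : α' ≤ α
  · have hmain := main (α+α') α α' rfl
    have hα' : (α':ℝ) ≤ (α:ℝ) := by exact_mod_cast h
    calc ‖t α α'‖ ≤ C0 * (((α+α':ℕ):ℝ)+1)^M := hmain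
      _ ≤ C0 * (2*(1+(α:ℝ)))^M := by
          apply mul_le_mul_of_nonneg_left _ hC0pos.le
          apply pow_le_pow_left₀ (by positivity) _ M
          push_cast
          linarith
      _ = C0*2^M*(1+(α:ℝ))^M := by rw [mul_pow]; ring
  · rw [hz α α' (Or.inl (by omega)), norm_zero]
    have h1 : (0:ℝ) ≤ (1+(α:ℝ))^M := by positivity
    exact mul_nonneg (mul_nonneg hC0pos.le (by positivity)) h1


end
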